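/- arXiv:2602.08722 — 2 statements merged into one kernel-verified Lean document; each statement's English description precedes it below -/
import Mathlib

section
/- Let q, k, M be nonzero vectors in ℝⁿ. Suppose CosSim(k, q) = β > 0 and CosSim(M, k) = α < 0, where CosSim(u,v) = ⟨u,v⟩/(‖u‖‖v‖). Then CosSim(M, q) ≤ 1 + αβ - α²/2 - β²/2. -/
noncomputable def cosSim {n : ℕ} (u v : EuclideanSpace ℝ (Fin n)) : ℝ :=
  (inner ℝ u v : ℝ) / (‖u‖ * ‖v‖)

lemma aux_unit {n : ℕ} (u v w : EuclideanSpace ℝ (Fin n))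
    (hu : ‖u‖ = 1) (hv : ‖v‖ = 1) (hw : ‖w‖ = 1) (α β : ℝ)
    (huw : (inner ℝ u w : ℝ) = α) (hwv : (inner ℝ w v : ℝ) = β) :
    (inner ℝ u v : ℝ) ≤ 1 + α * β - α ^ 2 / 2 - β ^ 2 / 2 := by
  have hwu : (inner ℝ w u : ℝ) = α := by rw [real_inner_comm]; exact huw
  have hvw : (inner ℝ v w : ℝ) = β := by rw [real_inner_comm]; exact hwv
  have hcs : (inner ℝ (u - α • w) (v - β • w) : ℝ) ≤ ‖u - α • w‖ * ‖v - β • w‖ :=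
    real_inner_le_norm _ _
  have hxy : (inner ℝ (u - α • w) (v - β • w) : ℝ) = (inner ℝ u v : ℝ) - α * β := by
    simp only [inner_sub_left, inner_sub_right, real_inner_smul_left,
      real_inner_smul_right, huw, hwv, hwu, hvw, real_inner_self_eq_norm_sq, hw]
    ring
  have hxsq : ‖u - α • w‖ ^ 2 = 1 - α ^ 2 := by
    rw [@norm_sub_sq_real, real_inner_smul_right, huw, norm_smul,
      Real.norm_eq_abs, hu, hw, mul_pow, sq_abs]
    ring
  have hysq : ‖v - β • w‖ ^ 2 = 1 - β ^ 2 := by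
    rw [@norm_sub_sq_real, real_inner_smul_right, hvw, norm_smul,
      Real.norm_eq_abs, hv, hw, mul_pow, sq_abs]
    ring
  nlinarith [hcs, hxy, hxsq, hysq, sq_nonneg (‖u - α • w‖ - ‖v - β • w‖),
    norm_nonneg (u - α • w), norm_nonneg (v - β • w)]

theorem stmt0 {n : ℕ} (q k M : EuclideanSpace ℝ (Fin n))
    (hq : q ≠ 0) (hk : k ≠ 0) (hM : M ≠ 0) (α β : ℝ)
    (hβ : cosSim k q = β) (hβpos : 0 < β)
    (hα : cosSim M k = α) (hαneg : α < 0) :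
    cosSim M q ≤ 1 + α * β - α ^ 2 / 2 - β ^ 2 / 2 := by
  have hMn : (0:ℝ) < ‖M‖ := norm_pos_iff.mpr hM
  have hqn : (0:ℝ) < ‖q‖ := norm_pos_iff.mpr hq
  have hkn : (0:ℝ) < ‖k‖ := norm_pos_iff.mpr hk
  have hu : ‖(‖M‖⁻¹ • M : EuclideanSpace ℝ (Fin n))‖ = 1 := by
    rw [norm_smul, Real.norm_eq_abs, abs_inv, abs_of_pos hMn]
    field_simp
  have hv : ‖(‖q‖⁻¹ • q : EuclideanSpace ℝ (Fin n))‖ = 1 := by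
    rw [norm_smul, Real.norm_eq_abs, abs_inv, abs_of_pos hqn]
    field_simp
  have hw : ‖(‖k‖⁻¹ • k : EuclideanSpace ℝ (Fin n))‖ = 1 := by
    rw [norm_smul, Real.norm_eq_abs, abs_inv, abs_of_pos hkn]
    field_simp
  have huw : (inner ℝ (‖M‖⁻¹ • M) (‖k‖⁻¹ • k) : ℝ) = α := by
    rw [real_inner_smul_left, real_inner_smul_right, ← hα]
    unfold cosSim
    field_simp
  have hwv : (inner ℝ (‖k‖⁻¹ • k) (‖q‖⁻¹ • q) : ℝ) = β := by
    rw [real_inner_smul_left, real_inner_smul_right, ← hβ]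
    unfold cosSim
    field_simp
  have huv : cosSim M q = (inner ℝ (‖M‖⁻¹ • M) (‖q‖⁻¹ • q) : ℝ) := by
    rw [real_inner_smul_left, real_inner_smul_right]
    unfold cosSim
    field_simp
  rw [huv]
  exact aux_unit _ _ _ hu hv hw α β huw hwv
end

section
/- Let q, k, M be nonzero vectors in ℝⁿ with CosSim(k, q) = β > 0 and CosSim(M, k) = α < 0. Then CosSim(M, q) ≤ 1 - (α - β)²/2 < 1 - β²/2. -/
lemma unit_bound {n : ℕ} (u v w : EuclideanSpace ℝ (Fin n)) (α β : ℝ)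
    (hu : ‖u‖ = 1) (hv : ‖v‖ = 1) (hw : ‖w‖ = 1)
    (ha : (inner ℝ u w : ℝ) = α) (hb : (inner ℝ w v : ℝ) = β) :
    (inner ℝ u v : ℝ) ≤ 1 - (α - β) ^ 2 / 2 := by
  have hww : (inner ℝ w w : ℝ) = 1 := by
    rw [real_inner_self_eq_norm_sq, hw]; norm_num
  have huu : (inner ℝ u u : ℝ) = 1 := by
    rw [real_inner_self_eq_norm_sq, hu]; norm_num
  have hvv : (inner ℝ v v : ℝ) = 1 := by
    rw [real_inner_self_eq_norm_sq, hv]; norm_num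
  have hwv : (inner ℝ v w : ℝ) = β := by rw [real_inner_comm]; exact hb
  have key : (inner ℝ (u - α • w) (v - β • w) : ℝ) = (inner ℝ u v : ℝ) - α * β := by
    simp only [inner_sub_left, inner_sub_right, real_inner_smul_left, real_inner_smul_right]
    rw [hww, ha, hb]; ring
  have cs : (inner ℝ (u - α • w) (v - β • w) : ℝ) ≤ ‖u - α • w‖ * ‖v - β • w‖ :=
    real_inner_le_norm _ _
  have h1 : ‖u - α • w‖ ^ 2 = 1 - α ^ 2 := by
    rw [← real_inner_self_eq_norm_sq]
    simp only [inner_sub_left, inner_sub_right, real_inner_smul_left, real_inner_smul_right]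
    rw [hww, huu, real_inner_comm u w, ha]; ring
  have h2 : ‖v - β • w‖ ^ 2 = 1 - β ^ 2 := by
    rw [← real_inner_self_eq_norm_sq]
    simp only [inner_sub_left, inner_sub_right, real_inner_smul_left, real_inner_smul_right]
    rw [hww, hvv, hwv, hb]; ring
  nlinarith [norm_nonneg (u - α • w), norm_nonneg (v - β • w),
    sq_nonneg (‖u - α • w‖ - ‖v - β • w‖)]

theorem stmt16 {n : ℕ} (q k M : EuclideanSpace ℝ (Fin n))
    (hq : q ≠ 0) (hk : k ≠ 0) (hM : M ≠ 0) (α β : ℝ)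
    (hβ : cosSim k q = β) (hβpos : 0 < β)
    (hα : cosSim M k = α) (hαneg : α < 0) :
    cosSim M q ≤ 1 - (α - β) ^ 2 / 2 ∧ 1 - (α - β) ^ 2 / 2 < 1 - β ^ 2 / 2 := by
  have hqn : ‖q‖ ≠ 0 := norm_ne_zero_iff.mpr hq
  have hkn : ‖k‖ ≠ 0 := norm_ne_zero_iff.mpr hk
  have hMn : ‖M‖ ≠ 0 := norm_ne_zero_iff.mpr hM
  set u := ‖M‖⁻¹ • M with hu_def
  set v := ‖q‖⁻¹ • q with hv_def
  set w := ‖k‖⁻¹ • k with hw_def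
  have hu : ‖u‖ = 1 := by
    rw [hu_def, norm_smul]; simp [abs_of_nonneg (inv_nonneg.mpr (norm_nonneg M))]
    field_simp
  have hv : ‖v‖ = 1 := by
    rw [hv_def, norm_smul]; simp [abs_of_nonneg (inv_nonneg.mpr (norm_nonneg q))]
    field_simp
  have hw : ‖w‖ = 1 := by
    rw [hw_def, norm_smul]; simp [abs_of_nonneg (inv_nonneg.mpr (norm_nonneg k))]
    field_simp
  have ha : (inner ℝ u w : ℝ) = α := by
    rw [hu_def, hw_def, real_inner_smul_left, real_inner_smul_right, ← hα]
    unfold cosSim; field_simp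
  have hb : (inner ℝ w v : ℝ) = β := by
    rw [hw_def, hv_def, real_inner_smul_left, real_inner_smul_right, ← hβ]
    unfold cosSim; field_simp
  have huv : (inner ℝ u v : ℝ) = cosSim M q := by
    rw [hu_def, hv_def, real_inner_smul_left, real_inner_smul_right]
    unfold cosSim; field_simp
  constructor
  · rw [← huv]; exact unit_bound u v w α β hu hv hw ha hb
  · nlinarith
end
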